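/- arXiv:2404.14201 — 4 statements merged into one kernel-verified Lean document; each statement's English description precedes it below -/
import Mathlib

section
/- Let M = ℤ^n and let u, u' ∈ M be primitive and linearly independent over ℤ. Then in the Laurent polynomial ring ℤ[M] (the group algebra of M over ℤ), the elements 1 - e^{-u} and 1 - e^{-u'} are relatively prime (have no common non-unit factor). -/
open AddMonoidAlgebra

/-- A coefficient extraction: `1 - e^v ≠ 0` when `v ≠ 0`. -/
private lemma aux_sub_single_ne {M : Type*} [AddCommGroup M] {v : M} (hv : v ≠ 0) :
    (1 - AddMonoidAlgebra.single v (1 : ℤ) : AddMonoidAlgebra ℤ M) ≠ 0 := by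
  classical
  intro h
  have h0 : (1 - AddMonoidAlgebra.single v (1 : ℤ) : AddMonoidAlgebra ℤ M).coeff 0 = 0 := by
    rw [h]; rfl
  rw [AddMonoidAlgebra.one_def, AddMonoidAlgebra.coeff_sub, Finsupp.sub_apply,
    AddMonoidAlgebra.coeff_single, AddMonoidAlgebra.coeff_single, Finsupp.single_apply,
    Finsupp.single_apply] at h0
  simp [hv] at h0

/-- Gcd 1 gives a linear functional taking value 1. -/
private lemma aux_exists_comb {n : ℕ} (u : Fin n → ℤ) (hu : Finset.univ.gcd u = 1) :
    ∃ c : Fin n → ℤ, ∑ i, c i * u i = 1 := by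
  have h1 : (1 : ℤ) ∈ Ideal.span (Set.range u) := by
    obtain ⟨g, hg⟩ := (IsPrincipalIdealRing.principal (Ideal.span (Set.range u))).principal
    have hgu : ∀ i, g ∣ u i := by
      intro i
      have : u i ∈ Ideal.span (Set.range u) := Ideal.subset_span ⟨i, rfl⟩
      rw [hg] at this
      exact (Ideal.mem_span_singleton).mp this
    have hg1 : g ∣ 1 := by
      rw [← hu]; exact Finset.dvd_gcd fun i _ => hgu i
    have : Ideal.span (Set.range u) = ⊤ := by
      rw [hg]; exact Ideal.span_singleton_eq_top.mpr (isUnit_of_dvd_one hg1)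
    rw [this]; trivial
  obtain ⟨c, hc⟩ := (Submodule.mem_span_range_iff_exists_fun ℤ).mp h1
  exact ⟨c, by simpa [smul_eq_mul] using hc⟩

/-- In the Laurent polynomial ring ℤ[M] = ℤ[ℤⁿ], if u, u' ∈ M = ℤⁿ are
primitive (coordinate gcd equal to 1) and linearly independent over ℤ, then
1 - e^{-u} and 1 - e^{-u'} are relatively prime: every common divisor is a unit. -/
theorem relatively_prime_euler_classes (n : ℕ) (u u' : Fin n → ℤ)
    (hu : Finset.univ.gcd u = 1) (hu' : Finset.univ.gcd u' = 1)
    (hind : LinearIndependent ℤ ![u, u']) :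
    ∀ d : AddMonoidAlgebra ℤ (Fin n → ℤ),
      d ∣ (1 - AddMonoidAlgebra.single (-u) (1 : ℤ)) →
      d ∣ (1 - AddMonoidAlgebra.single (-u') (1 : ℤ)) →
      IsUnit d := by
  classical
  obtain ⟨c, hc⟩ := aux_exists_comb u hu
  set A := AddMonoidAlgebra ℤ (Fin n → ℤ)
  let φ : (Fin n → ℤ) → ℤ := fun x => ∑ i, c i * x i
  have hφadd : ∀ x y, φ (x + y) = φ x + φ y := by
    intro x y
    simp only [φ, Pi.add_apply, mul_add]
    rw [Finset.sum_add_distrib]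
  have hφu : φ u = 1 := hc
  let f : (Fin n → ℤ) →+ (Fin n → ℤ) :=
    { toFun := fun x => x - φ x • u
      map_zero' := by simp [φ]
      map_add' := by
        intro x y
        show (x + y) - φ (x + y) • u = (x - φ x • u) + (y - φ y • u)
        rw [hφadd, add_smul]
        abel }
  have hfu : f u = 0 := by
    show u - φ u • u = 0
    rw [hφu, one_smul, sub_self]
  let π : A →+* A := AddMonoidAlgebra.mapDomainRingHom ℤ f
  have hπsingle : ∀ (m : Fin n → ℤ) (b : ℤ),
      π (AddMonoidAlgebra.single m b) = AddMonoidAlgebra.single (f m) b := by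
    intro m b
    show AddMonoidAlgebra.mapDomain f (AddMonoidAlgebra.single m b) = AddMonoidAlgebra.single (f m) b
    exact AddMonoidAlgebra.mapDomain_single
  -- the prime element
  set p : A := 1 - AddMonoidAlgebra.single (-u) (1 : ℤ) with hp_def
  have hu0 : u ≠ 0 := by
    intro h
    rw [h] at hu
    have : Finset.univ.gcd (0 : Fin n → ℤ) = 0 :=
      Finset.gcd_eq_zero_iff.mpr fun _ _ => rfl
    rw [this] at hu
    exact zero_ne_one hu
  have hp0 : p ≠ 0 := aux_sub_single_ne (neg_ne_zero.mpr hu0)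
  have hπp : π p = 0 := by
    rw [hp_def, map_sub, map_one, hπsingle, map_neg, hfu, neg_zero,
      ← AddMonoidAlgebra.one_def, sub_self]
  set I : Ideal A := Ideal.span {p} with hI_def
  let mk : A →+* A ⧸ I := Ideal.Quotient.mk I
  have hmkp : mk p = 0 := Ideal.Quotient.eq_zero_iff_mem.mpr (Ideal.subset_span rfl)
  have h1 : mk (AddMonoidAlgebra.single (-u) (1 : ℤ)) = 1 := by
    have := hmkp
    rw [hp_def, map_sub, map_one, sub_eq_zero] at this
    exact this.symm
  have h2 : mk (AddMonoidAlgebra.single u (1 : ℤ)) = 1 := by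
    have hmul : AddMonoidAlgebra.single u (1 : ℤ) * AddMonoidAlgebra.single (-u) (1 : ℤ)
        = (1 : A) := by
      rw [AddMonoidAlgebra.single_mul_single, add_neg_cancel, mul_one,
        ← AddMonoidAlgebra.one_def]
    have := congrArg mk hmul
    rw [map_mul, h1, mul_one, map_one] at this
    exact this
  have hone : ∀ k : ℤ, mk (AddMonoidAlgebra.single (k • u) (1 : ℤ)) = 1 := by
    intro k
    induction k using Int.induction_on with
    | zero => simp [← AddMonoidAlgebra.one_def]
    | succ k ih =>
      have : ((k : ℤ) + 1) • u = (k : ℤ) • u + u := by rw [add_smul, one_smul]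
      rw [this, ← mul_one (1 : ℤ), ← AddMonoidAlgebra.single_mul_single, map_mul, ih, h2,
        mul_one]
    | pred k ih =>
      have : (-(k : ℤ) - 1) • u = (-(k : ℤ)) • u + (-u) := by
        rw [sub_smul, one_smul, sub_eq_add_neg]
      rw [this, ← mul_one (1 : ℤ), ← AddMonoidAlgebra.single_mul_single, map_mul, ih, h1,
        mul_one]
  have hmk : ∀ x : A, mk (π x) = mk x := by
    intro x
    induction x using AddMonoidAlgebra.induction_linear with
    | zero => simp
    | add a b ha hb => rw [map_add, map_add, map_add, ha, hb]
    | single m b =>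
      show mk (π (AddMonoidAlgebra.single m b)) = mk (AddMonoidAlgebra.single m b)
      have hsplit : AddMonoidAlgebra.single m b
          = AddMonoidAlgebra.single (f m) b * AddMonoidAlgebra.single (φ m • u) (1 : ℤ) := by
        rw [AddMonoidAlgebra.single_mul_single, mul_one]
        congr 1
        symm
        show m - φ m • u + φ m • u = m
        abel
      rw [hπsingle, hsplit, map_mul, hone, mul_one]
  -- p is "prime": p ∣ a * b → p ∣ a ∨ p ∣ b
  have hdvd_of_π : ∀ a : A, π a = 0 → p ∣ a := by
    intro a ha
    have : mk a = 0 := by rw [← hmk, ha, map_zero]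
    exact Ideal.mem_span_singleton.mp (Ideal.Quotient.eq_zero_iff_mem.mp this)
  have hprime : ∀ a b : A, p ∣ a * b → p ∣ a ∨ p ∣ b := by
    intro a b ⟨e, he⟩
    have : π a * π b = 0 := by
      rw [← map_mul, he, map_mul, hπp, zero_mul]
    rcases mul_eq_zero.mp this with h | h
    · exact Or.inl (hdvd_of_π a h)
    · exact Or.inr (hdvd_of_π b h)
  -- p does not divide q
  set q : A := 1 - AddMonoidAlgebra.single (-u') (1 : ℤ) with hq_def
  have hw0 : f (-u') ≠ 0 := by
    intro h
    rw [map_neg, neg_eq_zero] at h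
    have h' : u' - φ u' • u = 0 := h
    have hpair := LinearIndependent.pair_iff.mp hind (φ u') (-1)
    have : φ u' • u + (-1 : ℤ) • u' = 0 := by
      rw [sub_eq_zero] at h'
      rw [neg_one_smul, ← h']
      abel
    exact absurd (hpair this).2 (by norm_num)
  have hπq : π q ≠ 0 := by
    rw [hq_def, map_sub, map_one, hπsingle]
    exact aux_sub_single_ne hw0
  have hpq : ¬ p ∣ q := by
    rintro ⟨e, he⟩
    apply hπq
    rw [he, map_mul, hπp, zero_mul]
  -- conclude
  intro d hdp hdq
  obtain ⟨e, he⟩ := hdp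
  rcases hprime d e (he ▸ dvd_refl p) with h | h
  · exact absurd (h.trans hdq) hpq
  · obtain ⟨s, rfl⟩ := h
    have he' : 1 * p = (d * s) * p := by
      rw [one_mul]
      conv_lhs => rw [he]
      ring
    exact IsUnit.of_mul_eq_one s (mul_right_cancel₀ hp0 he'.symm)
end

section
/- Let Δ be a complete fan in N = ℤⁿ. For any cone τ ∈ Δ and any two maximal (n-dimensional) cones σ, σ' of Δ both containing τ as a face, there exists a finite sequence σ = σ₁, σ₂, …, σ_r = σ' of n-dimensional cones of Δ, each containing τ, such that σ_j ∩ σ_{j+1} is an (n−1)-dimensional cone for each j. -/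
/-- The dimension of a cone: the dimension of its linear span. -/
noncomputable def coneDim (n : ℕ) (C : Set (Fin n → ℝ)) : ℕ :=
  Module.finrank ℝ (Submodule.span ℝ C)

/-- `F` is a face of the cone `C`: it is cut out of `C` by a supporting linear form. -/
def IsFaceOf {n : ℕ} (F C : Set (Fin n → ℝ)) : Prop :=
  ∃ u : (Fin n → ℝ) →ₗ[ℝ] ℝ, (∀ x ∈ C, 0 ≤ u x) ∧ F = {x ∈ C | u x = 0}

/-- `C` is a rational polyhedral cone: the set of nonnegative real combinations of a
finite set of lattice points. -/
def IsRatPolyCone {n : ℕ} (C : Set (Fin n → ℝ)) : Prop :=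
  ∃ s : Finset (Fin n → ℤ),
    C = {x | ∃ c : (Fin n → ℤ) → ℝ, (∀ w, 0 ≤ c w) ∧
          x = ∑ w ∈ s, c w • (fun i => (w i : ℝ))}

/-- A fan in the lattice N = ℤⁿ: a finite collection of strongly convex rational
polyhedral cones, closed under taking faces, such that the intersection of any two
cones of the fan is a face of each. -/
structure Fan (n : ℕ) where
  cones : Set (Set (Fin n → ℝ))
  finite : cones.Finite
  poly : ∀ C ∈ cones, IsRatPolyCone C
  strongly_convex : ∀ C ∈ cones, ∀ x ∈ C, -x ∈ C → x = 0
  faces_mem : ∀ C ∈ cones, ∀ F, IsFaceOf F C → F ∈ cones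
  inter_face : ∀ C ∈ cones, ∀ C' ∈ cones, IsFaceOf (C ∩ C') C ∧ IsFaceOf (C ∩ C') C'

/-- A fan is complete if its support is all of N_ℝ. -/
def Fan.IsComplete {n : ℕ} (Δ : Fan n) : Prop := ⋃₀ Δ.cones = Set.univ

open Finset Module Set

variable {n : ℕ}

/-- Conic combinations of a finite set of vectors. -/
def coneSet (s : Finset (Fin n → ℝ)) : Set (Fin n → ℝ) :=
  {x | ∃ c : (Fin n → ℝ) → ℝ, (∀ w, 0 ≤ c w) ∧ x = ∑ w ∈ s, c w • w}

lemma coneSet_zero_mem (s : Finset (Fin n → ℝ)) : 0 ∈ coneSet s :=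
  ⟨0, fun _ => le_refl _, by simp⟩

lemma coneSet_mono {s t : Finset (Fin n → ℝ)} (h : s ⊆ t) : coneSet s ⊆ coneSet t := by
  rintro x ⟨c, hc, rfl⟩
  classical
  refine ⟨fun v => if v ∈ s then c v else 0, ?_, ?_⟩
  · intro w; by_cases hw : w ∈ s <;> simp [hw, hc w]
  · rw [← Finset.sum_subset h (fun w _ hws => by simp [hws])]
    exact Finset.sum_congr rfl fun w hw => by simp [hw]

lemma coneSet_convex (s : Finset (Fin n → ℝ)) : Convex ℝ (coneSet s) := by
  rintro x ⟨c, hc, rfl⟩ y ⟨d, hd, rfl⟩ a b ha hb _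
  refine ⟨fun w => a * c w + b * d w,
    fun w => add_nonneg (mul_nonneg ha (hc w)) (mul_nonneg hb (hd w)), ?_⟩
  rw [Finset.smul_sum, Finset.smul_sum, ← Finset.sum_add_distrib]
  exact Finset.sum_congr rfl fun w _ => by rw [add_smul, smul_smul, smul_smul]

/-- Conic Carathéodory. -/
lemma caratheodory_cone (s : Finset (Fin n → ℝ)) {x : Fin n → ℝ} (hx : x ∈ coneSet s) :
    ∃ t ⊆ s, LinearIndependent ℝ (fun w : {w // w ∈ t} => (w : Fin n → ℝ)) ∧ x ∈ coneSet t := by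
  classical
  obtain ⟨N, hN⟩ : ∃ N, s.card ≤ N := ⟨s.card, le_refl _⟩
  induction N generalizing s with
  | zero =>
    refine ⟨s, Finset.Subset.refl s, ?_, hx⟩
    rw [Nat.le_zero, Finset.card_eq_zero] at hN; subst hN
    exact linearIndependent_empty_type
  | succ N ih =>
    by_cases hli : LinearIndependent ℝ (fun w : {w // w ∈ s} => (w : Fin n → ℝ))
    · exact ⟨s, Finset.Subset.refl s, hli, hx⟩
    obtain ⟨g, hgsum, i₀, hgi₀⟩ := Fintype.not_linearIndependent_iff.1 hli
    obtain ⟨c, hc, rfl⟩ := hx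
    -- extend g to all of V
    set gg : (Fin n → ℝ) → ℝ := fun v => if h : v ∈ s then g ⟨v, h⟩ else 0 with hgg
    -- WLOG there is an index with positive coefficient; otherwise use -g
    have key : ∀ g : {w // w ∈ s} → ℝ, (∑ i, g i • (i : Fin n → ℝ)) = 0 →
        (∃ i, 0 < g i) →
        ∃ t ⊆ s, LinearIndependent ℝ (fun w : {w // w ∈ t} => (w : Fin n → ℝ)) ∧
          (∑ w ∈ s, c w • w) ∈ coneSet t := by
      intro g hgsum hpos
      set gg : (Fin n → ℝ) → ℝ := fun v => if h : v ∈ s then g ⟨v, h⟩ else 0 with hggdef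
      have hggs : ∀ i : {w // w ∈ s}, gg i = g i := fun i => by
        simp [hggdef, i.2]
      have hsum' : ∑ w ∈ s, gg w • w = 0 := by
        rw [← Finset.sum_coe_sort s (fun w => gg w • w)]
        simpa only [hggs] using hgsum
      obtain ⟨i, hipos⟩ := hpos
      have hT : ((s.filter (fun w => 0 < gg w))).Nonempty :=
        ⟨i, Finset.mem_filter.2 ⟨i.2, by rw [hggs]; exact hipos⟩⟩
      obtain ⟨j, hjT, hjmin⟩ := Finset.exists_min_image _ (fun w => c w / gg w) hT
      obtain ⟨hjs, hjpos⟩ := Finset.mem_filter.1 hjT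
      set lam := c j / gg j with hlam
      have hlam0 : 0 ≤ lam := div_nonneg (hc j) hjpos.le
      set c' : (Fin n → ℝ) → ℝ := fun v => if v ∈ s.erase j then c v - lam * gg v else 0
        with hc'def
      have hc'nonneg : ∀ w, 0 ≤ c' w := by
        intro w
        show (0:ℝ) ≤ if w ∈ s.erase j then c w - lam * gg w else 0
        split
        · rename_i hw
          have hws := Finset.mem_of_mem_erase hw
          rcases le_or_gt (gg w) 0 with h | h
          · have : lam * gg w ≤ 0 := mul_nonpos_of_nonneg_of_nonpos hlam0 h
            linarith [hc w]
          · have hwT : w ∈ s.filter (fun w => 0 < gg w) := Finset.mem_filter.2 ⟨hws, h⟩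
            have hle : lam * gg w ≤ c w := (le_div_iff₀ h).1 (hjmin w hwT)
            linarith
        · exact le_refl _
      have hsum2 : ∑ w ∈ s, c w • w = ∑ w ∈ s.erase j, c' w • w := by
        have h1 : ∑ w ∈ s.erase j, c' w • w = ∑ w ∈ s.erase j, (c w - lam * gg w) • w :=
          Finset.sum_congr rfl fun w hw => by rw [hc'def]; simp [hw]
        have h2 : ∑ w ∈ s, (c w - lam * gg w) • w
            = ∑ w ∈ s, c w • w - lam • ∑ w ∈ s, gg w • w := by
          rw [Finset.smul_sum, ← Finset.sum_sub_distrib]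
          exact Finset.sum_congr rfl fun w _ => by
            rw [sub_smul, smul_smul]
        have hcj' : c j - lam * gg j = 0 := by
          have : lam * gg j = c j := div_mul_cancel₀ (c j) hjpos.ne'
          linarith
        have h3 : ∑ w ∈ s.erase j, (c w - lam * gg w) • w = ∑ w ∈ s, (c w - lam * gg w) • w :=
          Finset.sum_erase s (by rw [hcj', zero_smul])
        rw [h1, h3, h2, hsum', smul_zero, sub_zero]
      have hcard : (s.erase j).card ≤ N := by
        have := Finset.card_erase_of_mem hjs
        omega
      obtain ⟨t, hts, hli, hmem⟩ := ih (s.erase j) ⟨c', hc'nonneg, hsum2⟩ hcard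
      exact ⟨t, hts.trans (Finset.erase_subset _ _), hli, hmem⟩
    rcases lt_trichotomy (g i₀) 0 with h | h | h
    · refine key (-g) ?_ ⟨i₀, by simpa using h⟩
      simp only [Pi.neg_apply, neg_smul, Finset.sum_neg_distrib, hgsum, neg_zero]
    · exact absurd h hgi₀
    · exact key g hgsum ⟨i₀, h⟩


lemma coneSet_isClosed_of_li {t : Finset (Fin n → ℝ)}
    (hli : LinearIndependent ℝ (fun w : {w // w ∈ t} => (w : Fin n → ℝ))) :
    IsClosed (coneSet t) := by
  classical
  set φ : ({w // w ∈ t} → ℝ) →ₗ[ℝ] (Fin n → ℝ) :=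
    { toFun := fun c => ∑ i : {w // w ∈ t}, c i • (i : Fin n → ℝ)
      map_add' := fun c d => by
        rw [← Finset.sum_add_distrib]
        exact Finset.sum_congr rfl fun i _ => by rw [Pi.add_apply, add_smul]
      map_smul' := fun a c => by
        rw [Finset.smul_sum]
        exact Finset.sum_congr rfl fun i _ => by
          rw [Pi.smul_apply, smul_smul, RingHom.id_apply, smul_eq_mul] } with hφ
  have hker : LinearMap.ker φ = ⊥ := by
    apply LinearMap.ker_eq_bot'.2
    intro c hc
    funext i
    exact Fintype.linearIndependent_iff.1 hli c hc i
  have hembed : Topology.IsClosedEmbedding φ := LinearMap.isClosedEmbedding_of_injective hker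
  have horth : IsClosed {c : {w // w ∈ t} → ℝ | ∀ i, 0 ≤ c i} := by
    have : {c : {w // w ∈ t} → ℝ | ∀ i, 0 ≤ c i} = ⋂ i, {c | 0 ≤ c i} := by
      ext c; simp [Set.mem_iInter]
    rw [this]
    exact isClosed_iInter fun i => isClosed_le continuous_const (continuous_apply i)
  have himg : coneSet t = φ '' {c | ∀ i, 0 ≤ c i} := by
    ext x
    constructor
    · rintro ⟨c, hc, rfl⟩
      refine ⟨fun i => c i, fun i => hc i, ?_⟩
      show ∑ i : {w // w ∈ t}, c i • (i : Fin n → ℝ) = _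
      rw [Finset.sum_coe_sort t (fun w => c w • w)]
    · rintro ⟨c, hc, rfl⟩
      refine ⟨fun v => if h : v ∈ t then c ⟨v, h⟩ else 0, ?_, ?_⟩
      · intro w
        by_cases hw : w ∈ t
        · simpa [hw] using hc ⟨w, hw⟩
        · simp [hw]
      · show _ = ∑ w ∈ t, (if h : w ∈ t then c ⟨w, h⟩ else 0) • w
        rw [← Finset.sum_coe_sort t (fun w => (if h : w ∈ t then c ⟨w, h⟩ else 0) • w)]
        exact (Finset.sum_congr rfl fun i _ => by simp [i.2]).symm
  rw [himg]
  exact hembed.isClosedMap _ horth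

lemma coneSet_isClosed (s : Finset (Fin n → ℝ)) : IsClosed (coneSet s) := by
  classical
  have hcover : coneSet s =
      ⋃ t ∈ {t : Finset (Fin n → ℝ) | t ⊆ s ∧
        LinearIndependent ℝ (fun w : {w // w ∈ t} => (w : Fin n → ℝ))}, coneSet t := by
    apply Set.Subset.antisymm
    · intro x hx
      obtain ⟨t, hts, hli, hxt⟩ := caratheodory_cone s hx
      exact Set.mem_biUnion ⟨hts, hli⟩ hxt
    · refine Set.iUnion₂_subset fun t ht => ?_
      rintro x ⟨c, hc, rfl⟩
      refine ⟨fun v => if v ∈ t then c v else 0, ?_, ?_⟩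
      · intro w; by_cases hw : w ∈ t <;> simp [hw, hc w]
      · rw [← Finset.sum_subset ht.1 (fun w _ hws => by simp [hws])]
        exact Finset.sum_congr rfl fun w hw => by simp [hw]
  rw [hcover]
  have hfin : {t : Finset (Fin n → ℝ) | t ⊆ s ∧
      LinearIndependent ℝ (fun w : {w // w ∈ t} => (w : Fin n → ℝ))}.Finite := by
    apply Set.Finite.subset (Set.finite_coe_iff.1 ?_ : (↑s.powerset : Set _).Finite)
    · intro t ht; simpa using ht.1
    · exact Set.finite_coe_iff.2 (s.powerset.finite_toSet)
  exact hfin.isClosed_biUnion fun t ht => coneSet_isClosed_of_li ht.2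

/-- A rational polyhedral cone is a `coneSet`. -/
lemma IsRatPolyCone.exists_coneSet {C : Set (Fin n → ℝ)} (h : IsRatPolyCone C) :
    ∃ s : Finset (Fin n → ℝ), C = coneSet s := by
  classical
  obtain ⟨s, rfl⟩ := h
  set ι : (Fin n → ℤ) → (Fin n → ℝ) := fun w i => (w i : ℝ) with hι
  have hinj : Function.Injective ι := by
    intro w w' hww'
    funext i
    have h := congrFun hww' i
    simp only [hι] at h
    exact_mod_cast h
  refine ⟨s.image ι, ?_⟩
  ext x
  constructor
  · rintro ⟨c, hc, rfl⟩
    refine ⟨fun v => ∑ w ∈ s.filter (fun w => ι w = v), c w,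
      fun v => Finset.sum_nonneg fun w _ => hc w, ?_⟩
    rw [Finset.sum_image (fun w hw w' hw' hww' => hinj hww')]
    refine Finset.sum_congr rfl fun w hw => ?_
    have : s.filter (fun w' => ι w' = ι w) = {w} := by
      ext w'
      simp only [Finset.mem_filter, Finset.mem_singleton]
      constructor
      · rintro ⟨_, h⟩; exact hinj h
      · rintro rfl; exact ⟨hw, rfl⟩
    dsimp only
    rw [this, Finset.sum_singleton]
  · rintro ⟨c, hc, rfl⟩
    refine ⟨fun w => c (ι w), fun w => hc _, ?_⟩
    rw [Finset.sum_image (fun w hw w' hw' hww' => hinj hww')]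


/-- A proper subspace of `Fin n → ℝ` has dense complement. -/
lemma dense_compl_of_finrank_lt {W : Submodule ℝ (Fin n → ℝ)}
    (hW : finrank ℝ W < n) : Dense ((W : Set (Fin n → ℝ)))ᶜ := by
  rw [← interior_eq_empty_iff_dense_compl]
  by_contra h
  have hWtop : W = ⊤ := Submodule.eq_top_of_nonempty_interior' W
    (Set.nonempty_iff_ne_empty.2 h)
  rw [hWtop, finrank_top, Module.finrank_fin_fun] at hW
  exact lt_irrefl _ hW

lemma isClosed_submodule (W : Submodule ℝ (Fin n → ℝ)) : IsClosed (W : Set (Fin n → ℝ)) :=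
  Submodule.closed_of_finiteDimensional W

/-- A linear form nonnegative on a neighborhood of a point where it vanishes is zero. -/
lemma linear_eq_zero_of_nonneg_nhds {u : (Fin n → ℝ) →ₗ[ℝ] ℝ} {x : Fin n → ℝ} {δ : ℝ}
    (hδ : 0 < δ) (hu : ∀ z ∈ Metric.ball x δ, 0 ≤ u z) (hx : u x = 0) : u = 0 := by
  apply LinearMap.ext; intro y
  by_cases hy : y = 0
  · simp [hy]
  have hy' : 0 < ‖y‖ := norm_pos_iff.2 hy
  set t := δ / (2 * ‖y‖) with ht
  have htpos : 0 < t := div_pos hδ (by positivity)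
  have hmem : ∀ ε : ℝ, |ε| ≤ t → x + ε • y ∈ Metric.ball x δ := by
    intro ε hε
    rw [Metric.mem_ball, dist_eq_norm]
    have : ‖x + ε • y - x‖ = |ε| * ‖y‖ := by
      rw [add_sub_cancel_left, norm_smul, Real.norm_eq_abs]
    rw [this]
    calc |ε| * ‖y‖ ≤ t * ‖y‖ := by nlinarith
      _ = δ / 2 := by rw [ht]; field_simp
      _ < δ := by linarith
  have h1 : 0 ≤ u (x + t • y) := hu _ (hmem t (by rw [abs_of_pos htpos]))
  have h2 : 0 ≤ u (x + (-t) • y) := hu _ (hmem (-t) (by rw [abs_neg, abs_of_pos htpos]))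
  simp only [map_add, map_smul, hx, smul_eq_mul, zero_add, neg_smul, map_neg] at h1 h2
  have : u y = 0 := by nlinarith
  simpa using this

/-- A face of a full-dimensional cone which is full-dimensional is the whole cone. -/
lemma face_eq_of_coneDim_eq {F C : Set (Fin n → ℝ)} (hF : IsFaceOf F C)
    (hdim : coneDim n F = n) : F = C := by
  obtain ⟨u, hu, rfl⟩ := hF
  have hspan : Submodule.span ℝ {x ∈ C | u x = 0} = ⊤ := by
    apply Submodule.eq_top_of_finrank_eq
    rw [show Module.finrank ℝ (Submodule.span ℝ {x ∈ C | u x = 0}) = n from hdim,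
      Module.finrank_fin_fun]
  have huz : u = 0 := by
    have hle : Submodule.span ℝ {x ∈ C | u x = 0} ≤ LinearMap.ker u := by
      rw [Submodule.span_le]
      rintro x ⟨_, hx⟩
      exact hx
    rw [hspan, top_le_iff] at hle
    apply LinearMap.ext; intro y
    have : y ∈ LinearMap.ker u := by rw [hle]; trivial
    simpa using this
  ext x
  simp [huz]


lemma ratPoly_convex {C : Set (Fin n → ℝ)} (h : IsRatPolyCone C) : Convex ℝ C := by
  obtain ⟨s, hs⟩ := h.exists_coneSet
  rw [hs]; exact coneSet_convex s

lemma ratPoly_isClosed {C : Set (Fin n → ℝ)} (h : IsRatPolyCone C) : IsClosed C := by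
  obtain ⟨s, hs⟩ := h.exists_coneSet
  rw [hs]; exact coneSet_isClosed s

lemma ratPoly_zero_mem {C : Set (Fin n → ℝ)} (h : IsRatPolyCone C) : (0 : Fin n → ℝ) ∈ C := by
  obtain ⟨s, hs⟩ := h.exists_coneSet
  rw [hs]; exact coneSet_zero_mem s

lemma coneDim_le (C : Set (Fin n → ℝ)) : coneDim n C ≤ n := by
  have := Submodule.finrank_le (Submodule.span ℝ C)
  rwa [Module.finrank_fin_fun] at this

/-- If a fan cone is contained in another fan cone, it is a face of it. -/
lemma face_of_subset (Δ : Fan n) {τ C : Set (Fin n → ℝ)} (hτ : τ ∈ Δ.cones)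
    (hC : C ∈ Δ.cones) (hsub : τ ⊆ C) : IsFaceOf τ C := by
  have h := (Δ.inter_face τ hτ C hC).2
  rwa [Set.inter_eq_left.2 hsub] at h

/-- Dense intersection of complements of finitely many closed proper subspaces. -/
lemma dense_biInter_compl {ι : Type*} {S : Set ι} (hS : S.Finite)
    (f : ι → Set (Fin n → ℝ)) (h : ∀ i ∈ S, IsOpen (f i)ᶜ ∧ Dense (f i)ᶜ) :
    Dense (⋂ i ∈ S, (f i)ᶜ) := by
  revert h
  refine Set.Finite.induction_on (motive := fun S _ => (∀ i ∈ S, IsOpen (f i)ᶜ ∧ Dense (f i)ᶜ) → Dense (⋂ i ∈ S, (f i)ᶜ)) S hS (fun _ => by simp) ?_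
  intro a S' _ _ ih h
  rw [Set.biInter_insert]
  exact Dense.inter_of_isOpen_left (h a (Set.mem_insert a S')).2
    (ih fun i hi => h i (Set.mem_insert_of_mem a hi)) (h a (Set.mem_insert a S')).1

/-- Every point lies in a full-dimensional cone of a complete fan. -/
lemma exists_fulldim_mem (Δ : Fan n) (hc : Δ.IsComplete) (z : Fin n → ℝ) :
    ∃ C ∈ Δ.cones, coneDim n C = n ∧ z ∈ C := by
  classical
  set A : Set (Fin n → ℝ) := ⋃ C ∈ {C | C ∈ Δ.cones ∧ coneDim n C = n}, C with hA
  have hAclosed : IsClosed A :=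
    Set.Finite.isClosed_biUnion (Δ.finite.subset fun C hC => hC.1)
      fun C hC => ratPoly_isClosed (Δ.poly C hC.1)
  set Low : Set (Set (Fin n → ℝ)) := {C | C ∈ Δ.cones ∧ coneDim n C ≠ n} with hLow
  have hdense : Dense (⋂ C ∈ Low, ((Submodule.span ℝ C : Submodule ℝ (Fin n → ℝ)) :
      Set (Fin n → ℝ))ᶜ) := by
    apply dense_biInter_compl (Δ.finite.subset fun C hC => hC.1)
    intro C hC
    have hlt : finrank ℝ (Submodule.span ℝ C) < n :=
      lt_of_le_of_ne (coneDim_le C) hC.2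
    exact ⟨(Submodule.closed_of_finiteDimensional _).isOpen_compl,
      dense_compl_of_finrank_lt hlt⟩
  have hsub : (⋂ C ∈ Low, ((Submodule.span ℝ C : Submodule ℝ (Fin n → ℝ)) :
      Set (Fin n → ℝ))ᶜ) ⊆ A := by
    intro z hz
    have : z ∈ ⋃₀ Δ.cones := by rw [hc]; trivial
    obtain ⟨C, hC, hzC⟩ := this
    by_cases hdim : coneDim n C = n
    · exact Set.mem_biUnion ⟨hC, hdim⟩ hzC
    · exfalso
      have hmem := Set.mem_iInter₂.1 hz C ⟨hC, hdim⟩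
      exact hmem (Submodule.subset_span hzC)
  have hAuniv : A = Set.univ := by
    apply Set.eq_univ_of_univ_subset
    calc Set.univ = closure (⋂ C ∈ Low, _) := hdense.closure_eq.symm
      _ ⊆ closure A := closure_mono hsub
      _ = A := hAclosed.closure_eq
  have : z ∈ A := hAuniv ▸ Set.mem_univ z
  obtain ⟨C, hC, hzC⟩ := Set.mem_iUnion₂.1 this
  exact ⟨C, hC.1, hC.2, hzC⟩

/-- A full-dimensional fan cone meeting the interior of another full-dim fan cone equals it. -/
lemma eq_of_mem_interior (Δ : Fan n) {C D : Set (Fin n → ℝ)} (hC : C ∈ Δ.cones)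
    (hD : D ∈ Δ.cones) (hdC : coneDim n C = n) (hdD : coneDim n D = n)
    {x : Fin n → ℝ} (hxC : x ∈ C) (hxD : x ∈ interior D) : C = D := by
  obtain ⟨u, hu, heq⟩ := (Δ.inter_face C hC D hD).2
  obtain ⟨δ, hδ, hball⟩ := Metric.isOpen_iff.1 isOpen_interior x hxD
  have hxCD : x ∈ C ∩ D := ⟨hxC, interior_subset hxD⟩
  have hux : u x = 0 := by
    rw [heq] at hxCD
    exact hxCD.2
  have huz : u = 0 :=
    linear_eq_zero_of_nonneg_nhds hδ
      (fun z hz => hu z (interior_subset (hball hz))) hux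
  have hDC : C ∩ D = D := by
    rw [heq, huz]
    simp
  have hdim : coneDim n (C ∩ D) = n := by rw [hDC]; exact hdD
  have := face_eq_of_coneDim_eq (Δ.inter_face C hC D hD).1 hdim
  rw [← this, hDC]

/-- Points of the interior of a full-dimensional cone arbitrarily close to a given point. -/
lemma exists_interior_near {σ : Set (Fin n → ℝ)} (hconv : Convex ℝ σ) (hzero : (0:Fin n → ℝ) ∈ σ)
    (hdim : coneDim n σ = n) {p : Fin n → ℝ} (hp : p ∈ σ) {ε : ℝ} (hε : 0 < ε) :
    ∃ x ∈ interior σ, dist x p < ε := by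
  have hspan : Submodule.span ℝ σ = ⊤ :=
    Submodule.eq_top_of_finrank_eq (by rw [show finrank ℝ (Submodule.span ℝ σ) = n from hdim,
      Module.finrank_fin_fun])
  have haff : affineSpan ℝ σ = ⊤ := by
    rw [AffineSubspace.affineSpan_eq_top_iff_vectorSpan_eq_top_of_nonempty ℝ (Fin n → ℝ) (Fin n → ℝ)
      ⟨0, hzero⟩]
    apply Submodule.eq_top_of_finrank_eq
    have h1 : Submodule.span ℝ σ ≤ vectorSpan ℝ σ := by
      rw [Submodule.span_le]
      intro x hx
      have h1 : x - 0 ∈ vectorSpan ℝ σ := vsub_mem_vectorSpan ℝ hx hzero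
      simpa using h1
    have h2 := Submodule.finrank_mono h1
    have h3 := Submodule.finrank_le (vectorSpan ℝ σ)
    rw [hspan, finrank_top] at h2
    omega
  obtain ⟨q, hq⟩ := hconv.interior_nonempty_iff_affineSpan_eq_top.2 haff
  set t : ℝ := min 1 (ε / (2 * (‖q - p‖ + 1))) with htdef
  have ht0 : 0 < t := lt_min one_pos (by positivity)
  have ht1 : t ≤ 1 := min_le_left _ _
  refine ⟨p + t • (q - p), hconv.add_smul_sub_mem_interior hp hq ⟨ht0, ht1⟩, ?_⟩
  rw [dist_eq_norm, add_sub_cancel_left, norm_smul, Real.norm_eq_abs, abs_of_pos ht0]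
  have hle : t ≤ ε / (2 * (‖q - p‖ + 1)) := min_le_right _ _
  have hnorm : (0:ℝ) ≤ ‖q - p‖ := norm_nonneg _
  calc t * ‖q - p‖ ≤ (ε / (2 * (‖q - p‖ + 1))) * ‖q - p‖ := by nlinarith
    _ < ε := by
        rw [div_mul_eq_mul_div, div_lt_iff₀ (by positivity)]
        nlinarith

lemma exists_chain_list {α : Type*} {r : α → α → Prop} {a b : α}
    (h : Relation.ReflTransGen r a b) :
    ∃ l : List α, List.Chain r a l ∧ (a :: l).getLast (List.cons_ne_nil _ _) = b := by
  induction h using Relation.ReflTransGen.head_induction_on with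
  | refl => exact ⟨[], List.Chain.nil, rfl⟩
  | head hab _ ih =>
    obtain ⟨l, hch, hl⟩ := ih
    exact ⟨_ :: l, List.Chain.cons hab hch, by rw [List.getLast_cons]; exact hl⟩

lemma dedup_chain_list {α : Type*} {r : α → α → Prop} :
    ∀ (l : List α) (a : α), List.Chain r a l →
      ∃ l', List.Chain (fun C D => r C D ∧ C ≠ D) a l' ∧
        (a :: l').getLast (List.cons_ne_nil _ _) = (a :: l).getLast (List.cons_ne_nil _ _) := by
  intro l
  induction l with
  | nil => exact fun a _ => ⟨[], List.Chain.nil, rfl⟩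
  | cons b l2 ih =>
    intro a hch
    rcases List.chain_cons.1 hch with ⟨hab, hbl⟩
    obtain ⟨l2', hch', hlast'⟩ := ih b hbl
    by_cases hab' : a = b
    · subst hab'
      refine ⟨l2', hch', ?_⟩
      rw [hlast', List.getLast_cons (List.cons_ne_nil _ _)]
    · refine ⟨b :: l2', List.chain_cons.2 ⟨⟨hab, hab'⟩, hch'⟩, ?_⟩
      rw [List.getLast_cons (List.cons_ne_nil _ _),
        List.getLast_cons (List.cons_ne_nil _ _), hlast']

/-- In a complete fan Δ in ℤⁿ, for any cone τ and any two n-dimensional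
cones σ, σ' of Δ having τ as a face, there is a finite chain of n-dimensional cones
of Δ, all containing τ as a face, from σ to σ', in which consecutive cones intersect
in an (n−1)-dimensional cone. -/
theorem complete_fan_strongly_connected_through_walls
    (n : ℕ) (Δ : Fan n) (hc : Δ.IsComplete)
    (τ : Set (Fin n → ℝ)) (hτ : τ ∈ Δ.cones)
    (σ σ' : Set (Fin n → ℝ)) (hσ : σ ∈ Δ.cones) (hσ' : σ' ∈ Δ.cones)
    (hdσ : coneDim n σ = n) (hdσ' : coneDim n σ' = n)
    (hfσ : IsFaceOf τ σ) (hfσ' : IsFaceOf τ σ') :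
    ∃ (r : ℕ) (ch : Fin (r + 1) → Set (Fin n → ℝ)),
      ch 0 = σ ∧ ch (Fin.last r) = σ' ∧
      (∀ t, ch t ∈ Δ.cones ∧ coneDim n (ch t) = n ∧ IsFaceOf τ (ch t)) ∧
      (∀ t : Fin r, coneDim n (ch t.castSucc ∩ ch t.succ) = n - 1) := by

  classical
  -- trivial case
  by_cases hσσ' : σ = σ'
  · exact ⟨0, fun _ => σ, rfl, hσσ'.symm ▸ rfl, fun _ => ⟨hσ, hdσ, hfσ⟩, fun t => t.elim0⟩
  -- generators of τ and the "relative interior" point p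
  obtain ⟨sτ, hsτ⟩ := Δ.poly τ hτ
  set ι : (Fin n → ℤ) → (Fin n → ℝ) := fun w i => (w i : ℝ) with hι
  have hgen : ∀ w ∈ sτ, ι w ∈ τ := by
    intro w hw
    rw [hsτ]
    refine ⟨fun w' => if w' = w then 1 else 0, fun w' => by positivity, ?_⟩
    rw [Finset.sum_congr rfl (fun w' _ => by rw [ite_smul, one_smul, zero_smul]),
      Finset.sum_ite_eq' sτ w, if_pos hw]
  set p : Fin n → ℝ := ∑ w ∈ sτ, ι w with hpdef
  have hpτ : p ∈ τ := by
    rw [hsτ]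
    exact ⟨fun _ => 1, fun _ => zero_le_one, by simp [hpdef]; rfl⟩
  -- any fan cone containing p has τ as a face
  have hface_of_p : ∀ C ∈ Δ.cones, p ∈ C → IsFaceOf τ C := by
    intro C hC hpC
    obtain ⟨u, hu, hueq⟩ := (Δ.inter_face τ hτ C hC).1
    have hpτC : p ∈ τ ∩ C := ⟨hpτ, hpC⟩
    have hup : u p = 0 := by rw [hueq] at hpτC; exact hpτC.2
    have hsum : ∑ w ∈ sτ, u (ι w) = 0 := by
      rw [← map_sum]; exact hup
    have hzero : ∀ w ∈ sτ, u (ι w) = 0 :=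
      (Finset.sum_eq_zero_iff_of_nonneg fun w hw => hu _ (hgen w hw)).1 hsum
    have hτsub : τ ⊆ C := by
      intro z hz
      have hz' := hz
      rw [hsτ] at hz'
      obtain ⟨cz, hcz, rfl⟩ := hz'
      have huz : u (∑ w ∈ sτ, cz w • ι w) = 0 := by
        rw [map_sum]
        apply Finset.sum_eq_zero
        intro w hw
        rw [map_smul, hzero w hw, smul_zero]
      have : (∑ w ∈ sτ, cz w • ι w) ∈ τ ∩ C := by
        rw [hueq]; exact ⟨hz, huz⟩
      exact this.2
    exact face_of_subset Δ hτ hC hτsub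
  -- choose δ with ball p δ avoiding every cone not containing p
  set U : Set (Fin n → ℝ) := (⋃ C ∈ {C | C ∈ Δ.cones ∧ p ∉ C}, C)ᶜ with hUdef
  have hUopen : IsOpen U := by
    rw [hUdef, isOpen_compl_iff]
    exact Set.Finite.isClosed_biUnion (Δ.finite.subset fun C hC => hC.1)
      fun C hC => ratPoly_isClosed (Δ.poly C hC.1)
  have hpU : p ∈ U := by
    rw [hUdef, Set.mem_compl_iff]
    intro hmem
    obtain ⟨C, hC, hpC⟩ := Set.mem_iUnion₂.1 hmem
    exact hC.2 hpC
  obtain ⟨δ, hδ, hballU⟩ := Metric.isOpen_iff.1 hUopen p hpU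
  have hio : ∀ C ∈ Δ.cones, ∀ z ∈ C, z ∈ Metric.ball p δ → p ∈ C := by
    intro C hC z hzC hzball
    by_contra hpC
    have : z ∈ ⋃ C ∈ {C | C ∈ Δ.cones ∧ p ∉ C}, C := Set.mem_biUnion ⟨hC, hpC⟩ hzC
    exact (hballU hzball) this
  -- the "bad" low-dimensional cones
  set Bad : Set (Set (Fin n → ℝ)) := {C | C ∈ Δ.cones ∧ coneDim n C + 2 ≤ n} with hBadDef
  have hBadFin : Bad.Finite := Δ.finite.subset fun C hC => hC.1
  -- τ ⊆ σ, hence p ∈ σ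
  have hτσ : τ ⊆ σ := by
    obtain ⟨u0, _, heq0⟩ := hfσ
    rw [heq0]; exact fun z hz => hz.1
  have hτσ' : τ ⊆ σ' := by
    obtain ⟨u0, _, heq0⟩ := hfσ'
    rw [heq0]; exact fun z hz => hz.1
  -- choose the generic point x in the interior of σ
  have hσconv := ratPoly_convex (Δ.poly σ hσ)
  have hσ'conv := ratPoly_convex (Δ.poly σ' hσ')
  have hO1ne : (interior σ ∩ Metric.ball p δ).Nonempty := by
    obtain ⟨x0, hx0, hx0dist⟩ := exists_interior_near hσconv
      (ratPoly_zero_mem (Δ.poly σ hσ)) hdσ (hτσ hpτ) hδ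
    exact ⟨x0, hx0, Metric.mem_ball.2 hx0dist⟩
  have hD1dense : Dense (⋂ C ∈ Bad, ((Submodule.span ℝ C : Submodule ℝ (Fin n → ℝ)) :
      Set (Fin n → ℝ))ᶜ) := by
    apply dense_biInter_compl hBadFin
    intro C hC
    have hlt : finrank ℝ (Submodule.span ℝ C) < n := by
      have := hC.2
      rw [show coneDim n C = finrank ℝ (Submodule.span ℝ C) from rfl] at this
      omega
    exact ⟨(Submodule.closed_of_finiteDimensional _).isOpen_compl,
      dense_compl_of_finrank_lt hlt⟩
  obtain ⟨x, hxO1, hxD1⟩ := hD1dense.inter_open_nonempty _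
    (isOpen_interior.inter Metric.isOpen_ball) hO1ne
  have hxσ : x ∈ interior σ := hxO1.1
  have hxball : x ∈ Metric.ball p δ := hxO1.2
  have hxspan : ∀ C ∈ Bad, x ∉ (Submodule.span ℝ C : Set (Fin n → ℝ)) := by
    intro C hC
    exact Set.mem_iInter₂.1 hxD1 C hC
  -- the subspaces to avoid for y
  set VC : Set (Fin n → ℝ) → Submodule ℝ (Fin n → ℝ) :=
    fun C => Submodule.span ℝ (C ∪ {x}) with hVCdef
  have hVCfin : ∀ C ∈ Bad, finrank ℝ (VC C) < n := by
    intro C hC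
    have h1 : VC C = Submodule.span ℝ C ⊔ Submodule.span ℝ {x} := by
      rw [hVCdef]; exact Submodule.span_union C {x}
    have h2 : finrank ℝ (Submodule.span ℝ ({x} : Set (Fin n → ℝ))) ≤ 1 := by
      by_cases hx0 : x = (0 : Fin n → ℝ)
      · subst hx0
        rw [show Submodule.span ℝ ({(0:Fin n → ℝ)} : Set (Fin n → ℝ)) = ⊥ by simp]
        simp
      · rw [show Submodule.span ℝ ({x} : Set (Fin n → ℝ)) = ℝ ∙ x from rfl,
          finrank_span_singleton hx0]
    have h3 := Submodule.finrank_sup_add_finrank_inf_eq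
      (Submodule.span ℝ C) (Submodule.span ℝ ({x} : Set (Fin n → ℝ)))
    have h4 := hC.2
    rw [show coneDim n C = finrank ℝ (Submodule.span ℝ C) from rfl] at h4
    rw [h1]
    omega
  have hO2ne : (interior σ' ∩ Metric.ball p δ).Nonempty := by
    obtain ⟨y0, hy0, hy0dist⟩ := exists_interior_near hσ'conv
      (ratPoly_zero_mem (Δ.poly σ' hσ')) hdσ' (hτσ' hpτ) hδ
    exact ⟨y0, hy0, Metric.mem_ball.2 hy0dist⟩
  have hD2dense : Dense (⋂ C ∈ Bad, ((VC C : Submodule ℝ (Fin n → ℝ)) :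
      Set (Fin n → ℝ))ᶜ) := by
    apply dense_biInter_compl hBadFin
    intro C hC
    exact ⟨(Submodule.closed_of_finiteDimensional _).isOpen_compl,
      dense_compl_of_finrank_lt (hVCfin C hC)⟩
  obtain ⟨y, hyO2, hyD2⟩ := hD2dense.inter_open_nonempty _
    (isOpen_interior.inter Metric.isOpen_ball) hO2ne
  have hyσ' : y ∈ interior σ' := hyO2.1
  have hyball : y ∈ Metric.ball p δ := hyO2.2
  have hyVC : ∀ C ∈ Bad, y ∉ (VC C : Set (Fin n → ℝ)) := by
    intro C hC
    exact Set.mem_iInter₂.1 hyD2 C hC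
  -- the segment
  set γ : ℝ → (Fin n → ℝ) := fun u => x + u • (y - x) with hγdef
  have hγcont : Continuous γ := by
    apply continuous_const.add
    exact continuous_id.smul continuous_const
  have hγ0 : γ 0 = x := by simp [hγdef]
  have hγ1 : γ 1 = y := by simp [hγdef]
  have hseg : ∀ u ∈ Set.Icc (0:ℝ) 1, γ u ∈ Metric.ball p δ :=
    fun u hu => (convex_ball p δ).add_smul_sub_mem hxball hyball hu
  -- the segment avoids all bad cones
  have havoid : ∀ u ∈ Set.Icc (0:ℝ) 1, ∀ C ∈ Bad, γ u ∉ C := by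
    rintro u _ C hC hzC
    have hxVC : x ∈ (VC C : Set (Fin n → ℝ)) :=
      Submodule.subset_span (Set.mem_union_right _ rfl)
    rcases eq_or_ne u 0 with rfl | hu0
    · rw [hγ0] at hzC
      exact hxspan C hC (Submodule.subset_span hzC)
    · have hzVC : γ u ∈ (VC C : Set (Fin n → ℝ)) :=
        Submodule.subset_span (Set.mem_union_left _ hzC)
      have hyeq : y = x + u⁻¹ • (γ u - x) := by
        rw [hγdef]
        simp only [add_sub_cancel_left]
        rw [smul_smul, inv_mul_cancel₀ hu0, one_smul]
        abel
      have : y ∈ (VC C : Set (Fin n → ℝ)) := by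
        rw [hyeq]
        exact (VC C).add_mem hxVC ((VC C).smul_mem _ ((VC C).sub_mem hzVC hxVC))
      exact hyVC C hC this
  -- the good cones
  set G : Set (Set (Fin n → ℝ)) :=
    {C | C ∈ Δ.cones ∧ coneDim n C = n ∧ IsFaceOf τ C} with hGdef
  have hσG : σ ∈ G := ⟨hσ, hdσ, hfσ⟩
  have hσ'G : σ' ∈ G := ⟨hσ', hdσ', hfσ'⟩
  have hGfull : ∀ u ∈ Set.Icc (0:ℝ) 1, ∃ C ∈ G, γ u ∈ C := by
    intro u hu
    obtain ⟨C, hC, hCdim, hzC⟩ := exists_fulldim_mem Δ hc (γ u)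
    have hpC : p ∈ C := hio C hC _ hzC (hseg u hu)
    exact ⟨C, ⟨hC, hCdim, hface_of_p C hC hpC⟩, hzC⟩
  -- walking through the walls: connectivity of the segment
  set link : Set (Fin n → ℝ) → Set (Fin n → ℝ) → Prop :=
    fun C D => C ∈ G ∧ D ∈ G ∧ ∃ u ∈ Set.Icc (0:ℝ) 1, γ u ∈ C ∧ γ u ∈ D with hlinkdef
  set S : Set (Set (Fin n → ℝ)) := {C | C ∈ G ∧ Relation.ReflTransGen link σ C} with hSdef
  set IC : Set (Fin n → ℝ) → Set ℝ := fun C => Set.Icc (0:ℝ) 1 ∩ γ ⁻¹' C with hICdef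
  have hICclosed : ∀ C ∈ Δ.cones, IsClosed (IC C) := fun C hC =>
    isClosed_Icc.inter ((ratPoly_isClosed (Δ.poly C hC)).preimage hγcont)
  set A : Set ℝ := ⋃ C ∈ S, IC C with hAdef
  set B : Set ℝ := ⋃ C ∈ G \ S, IC C with hBdef
  have hAclosed : IsClosed A :=
    Set.Finite.isClosed_biUnion (Δ.finite.subset fun C hC => hC.1.1)
      fun C hC => hICclosed C hC.1.1
  have hBclosed : IsClosed B :=
    Set.Finite.isClosed_biUnion (Δ.finite.subset fun C hC => hC.1.1)
      fun C hC => hICclosed C hC.1.1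
  have hcov : Set.Icc (0:ℝ) 1 ⊆ A ∪ B := by
    intro u hu
    obtain ⟨C, hCG, hzC⟩ := hGfull u hu
    by_cases hCS : C ∈ S
    · exact Or.inl (Set.mem_biUnion hCS ⟨hu, hzC⟩)
    · exact Or.inr (Set.mem_biUnion ⟨hCG, hCS⟩ ⟨hu, hzC⟩)
  have hdisj : ∀ t, t ∈ A → t ∈ B → False := by
    intro t htA htB
    obtain ⟨C, hCS, htC⟩ := Set.mem_iUnion₂.1 htA
    obtain ⟨D, hDGS, htD⟩ := Set.mem_iUnion₂.1 htB
    have hlink : link C D := ⟨hCS.1, hDGS.1, t, htC.1, htC.2, htD.2⟩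
    exact hDGS.2 ⟨hDGS.1, hCS.2.tail hlink⟩
  have h0A : (Set.Icc (0:ℝ) 1 ∩ A).Nonempty := by
    refine ⟨0, ⟨le_refl 0, zero_le_one⟩, ?_⟩
    apply Set.mem_biUnion (show σ ∈ S from ⟨hσG, Relation.ReflTransGen.refl⟩)
    exact ⟨⟨le_refl 0, zero_le_one⟩, by rw [Set.mem_preimage, hγ0]; exact interior_subset hxσ⟩
  have hBempty : Set.Icc (0:ℝ) 1 ∩ B = ∅ := by
    by_contra hne
    rw [← Set.not_nonempty_iff_eq_empty] at hne
    push_neg at hne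
    obtain ⟨t, htI, htA, htB⟩ := isPreconnected_closed_iff.1 isPreconnected_Icc A B
      hAclosed hBclosed hcov h0A hne
    exact hdisj t htA htB
  -- σ' is reachable
  have hrtg : Relation.ReflTransGen link σ σ' := by
    obtain ⟨C, hCG, hzC⟩ := hGfull 1 ⟨zero_le_one, le_refl 1⟩
    have hCS : C ∈ S := by
      by_contra hCS
      have : (1:ℝ) ∈ Set.Icc (0:ℝ) 1 ∩ B :=
        ⟨⟨zero_le_one, le_refl 1⟩, Set.mem_biUnion ⟨hCG, hCS⟩
          ⟨⟨zero_le_one, le_refl 1⟩, hzC⟩⟩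
      rw [hBempty] at this
      exact this
    have hCσ' : C = σ' := by
      apply eq_of_mem_interior Δ hCG.1 hσ' hCG.2.1 hdσ'
      · rwa [hγ1] at hzC
      · exact hyσ'
    rw [← hCσ']
    exact hCS.2
  -- extract a chain list
  obtain ⟨l, hchain, hlast⟩ := exists_chain_list hrtg
  obtain ⟨l', hchain', hlast''⟩ := dedup_chain_list l σ hchain
  rw [hlast] at hlast''
  -- convert to a Fin-indexed chain
  set L : List (Set (Fin n → ℝ)) := σ :: l' with hLdef
  have hLlen : L.length = l'.length + 1 := by simp [hLdef]
  refine ⟨l'.length, fun i => L.get ⟨i.1, by rw [hLlen]; exact i.2⟩, ?_, ?_, ?_, ?_⟩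
  · rfl
  · show L.get ⟨l'.length, _⟩ = σ'
    rw [← hlast'', List.getLast_eq_getElem]
    rfl
  · -- membership of all chain elements in G
    have hmem : ∀ i (h : i < L.length), L.get ⟨i, h⟩ ∈ G := by
      intro i h
      match i, h with
      | 0, h => exact hσG
      | (j+1), h =>
        have hC' : List.Chain' (fun C D => link C D ∧ C ≠ D) L := hchain'
        have := List.isChain_iff_getElem.1 hC' j (by omega)
        exact this.1.2.1
    intro t
    have := hmem t.1 (by rw [hLlen]; exact t.2)
    exact ⟨this.1, this.2.1, this.2.2⟩
  · -- the wall condition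
    intro t
    have hti := t.2
    have hC' : List.Chain' (fun C D => link C D ∧ C ≠ D) L := hchain'
    have hstep := List.isChain_iff_getElem.1 hC' t.1 (by rw [hLlen]; omega)
    obtain ⟨⟨hCG, hDG, u0, hu0, hzC, hzD⟩, hne⟩ := hstep
    set C := L.get ⟨t.1, by rw [hLlen]; omega⟩
    set D := L.get ⟨t.1 + 1, by rw [hLlen]; omega⟩
    show coneDim n (C ∩ D) = n - 1
    have hCc : C ∈ Δ.cones := hCG.1
    have hDc : D ∈ Δ.cones := hDG.1
    have hfaceC : IsFaceOf (C ∩ D) C := (Δ.inter_face C hCc D hDc).1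
    have hfaceD : IsFaceOf (C ∩ D) D := (Δ.inter_face C hCc D hDc).2
    have hFcone : C ∩ D ∈ Δ.cones := Δ.faces_mem C hCc _ hfaceC
    have hzF : γ u0 ∈ C ∩ D := ⟨hzC, hzD⟩
    have hnotbad : ¬ (coneDim n (C ∩ D) + 2 ≤ n) := by
      intro hbad
      exact havoid u0 hu0 (C ∩ D) ⟨hFcone, hbad⟩ hzF
    have hnotfull : coneDim n (C ∩ D) ≠ n := by
      intro hfull
      exact hne ((face_eq_of_coneDim_eq hfaceC hfull).symm.trans
        (face_eq_of_coneDim_eq hfaceD hfull))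
    have hle := coneDim_le (C ∩ D)
    omega
end

section
/- Let Δ be a complete cellular fan in N = ℤⁿ, i.e., there is an ordering σ₁ < … < σ_m of the maximal cones and distinguished faces τ_i ⪯ σ_i such that τ_i ⊆ σ_j implies i ≤ j. Then if τ_i is a face of σ_i with τ_i ⊆ σ_j only for j ≥ i, the sets Z_i := the union over j ≥ i of the orbit-cone strata indexed by faces γ with τ_j ⊆ γ ⊆ σ_j form a decreasing chain: for each i, the collection {γ ∈ Δ : τ_j ⊆ γ ⊆ σ_j for some j ≥ i} is closed under passing to cones γ' ∈ Δ containing γ (i.e., defines a closed union of strata). -/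
/-- combinatorial shadow that the Z_i are closed: Suppose Δ is a
collection of cones (as sets), σ₁ < … < σ_m are maximal cones with distinguished
faces τ_i ⪯ σ_i such that every cone γ ∈ Δ lies in exactly one "cell"
{γ : τ_j ⊆ γ ⊆ σ_j}, and the (star) condition holds: τ_i ⊆ σ_j implies i ≤ j.
Then for each i, the index set {γ ∈ Δ : τ_j ⊆ γ ⊆ σ_j for some j ≥ i} is closed
under passing to cones γ' ∈ Δ containing γ; i.e. Z_i = ∪_{j ≥ i} Y_j is a closed
union of orbit strata. -/
theorem upward_union_of_cells_closed
    (n m : ℕ) (Δ : Set (Set (Fin n → ℝ)))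
    (σ τ : Fin m → Set (Fin n → ℝ))
    (hσΔ : ∀ j, σ j ∈ Δ) (hτσ : ∀ j, τ j ⊆ σ j)
    (hpartition : ∀ γ ∈ Δ, ∃! j : Fin m, τ j ⊆ γ ∧ γ ⊆ σ j)
    (hstar : ∀ i j : Fin m, τ i ⊆ σ j → i ≤ j) :
    ∀ i : Fin m, ∀ γ ∈ Δ, ∀ γ' ∈ Δ, γ ⊆ γ' →
      (∃ j : Fin m, i ≤ j ∧ τ j ⊆ γ ∧ γ ⊆ σ j) →
      ∃ j' : Fin m, i ≤ j' ∧ τ j' ⊆ γ' ∧ γ' ⊆ σ j' := by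
  intro i γ hγ γ' hγ' hsub ⟨j, hij, hτγ, _⟩
  obtain ⟨j', ⟨hτ', hσ'⟩, -⟩ := hpartition γ' hγ'
  exact ⟨j', le_trans hij (hstar j j' (fun x hx => hσ' (hsub (hτγ hx)))), hτ', hσ'⟩
end

section
/- Let R be an integral domain and A ⊆ Rᵐ a subring defined by divisibility (GKM) conditions along a set E of pairs: A = {(a_i) : d_{ij} divides a_i − a_j for (i,j) ∈ E}, with d_{ij} ∈ R. Suppose for each index i there exist elements f_i ∈ A with (f_i)_i = c_i a nonzero element of R and (f_i)_l = 0 for l > i, and suppose for every a ∈ A and every i: if a_l = 0 for all l > i, then c_i divides a_i. Then every element of A is an R-linear combination of f₁,…,f_m; i.e., f₁,…,f_m generate A as an R-module. -/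
/-- Let A ⊆ Rᵐ be defined by GKM divisibility conditions over an
integral domain R. If there are triangular elements f_i ∈ A with (f_i)_i = c_i ≠ 0
and (f_i)_l = 0 for l > i, and every a ∈ A vanishing above level i has a_i divisible
by c_i, then f₁,…,f_m generate A as an R-module. -/
theorem gkm_triangular_elements_generate
    (R : Type) [CommRing R] [IsDomain R] (m : ℕ)
    (E : Set (Fin m × Fin m)) (d : Fin m × Fin m → R)
    (A : Set (Fin m → R))
    (hA : A = {a | ∀ p ∈ E, d p ∣ a p.1 - a p.2})
    (f : Fin m → (Fin m → R))
    (hfA : ∀ i, f i ∈ A)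
    (hdiag : ∀ i, f i i ≠ 0)
    (htri : ∀ i l : Fin m, i < l → f i l = 0)
    (hdvd : ∀ a ∈ A, ∀ i : Fin m, (∀ l, i < l → a l = 0) → f i i ∣ a i) :
    ∀ a ∈ A, ∃ coef : Fin m → R, a = ∑ i, coef i • f i := by
  subst hA
  suffices h : ∀ k : ℕ, ∀ a ∈ {a : Fin m → R | ∀ p ∈ E, d p ∣ a p.1 - a p.2},
      (∀ l : Fin m, k ≤ (l : ℕ) → a l = 0) → ∃ coef : Fin m → R, a = ∑ i, coef i • f i by
    intro a ha
    exact h m a ha (fun l hl => absurd l.2 (by omega))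
  intro k
  induction k with
  | zero =>
    intro a _ h0
    refine ⟨0, ?_⟩
    funext l
    simp [h0 l (Nat.zero_le _)]
  | succ k ih =>
    intro a ha hk
    by_cases hkm : k < m
    · set i : Fin m := ⟨k, hkm⟩ with hi
      have hvan : ∀ l, i < l → a l = 0 := fun l hl => hk l hl
      obtain ⟨q, hq⟩ := hdvd a ha i hvan
      set b : Fin m → R := a - q • f i with hb
      have hbA : b ∈ {a : Fin m → R | ∀ p ∈ E, d p ∣ a p.1 - a p.2} := by
        intro p hp
        have h1 := ha p hp
        have h2 := hfA i p hp
        have heq : b p.1 - b p.2 = (a p.1 - a p.2) - q * (f i p.1 - f i p.2) := by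
          simp [hb]; ring
        rw [heq]
        exact dvd_sub h1 (Dvd.dvd.mul_left h2 q)
      have hbk : ∀ l : Fin m, k ≤ (l : ℕ) → b l = 0 := by
        intro l hl
        rcases eq_or_lt_of_le hl with h | h
        · have hli : l = i := Fin.ext h.symm
          subst hli
          simp [hb, hq, mul_comm]
        · have hil : i < l := h
          simp [hb, hvan l hil, htri i l hil]
      obtain ⟨c, hc⟩ := ih b hbA hbk
      refine ⟨c + Pi.single i q, ?_⟩
      have hab : a = b + q • f i := by simp [hb]
      rw [hab, hc]
      have hsplit : ∀ j : Fin m, (c + (Pi.single i q : Fin m → R)) j • f j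
          = c j • f j + (Pi.single i q : Fin m → R) j • f j := by
        intro j; simp [add_smul]
      rw [Finset.sum_congr rfl (fun j _ => hsplit j), Finset.sum_add_distrib]
      congr 1
      rw [Finset.sum_eq_single i]
      · simp
      · intro j _ hj; simp [Pi.single_eq_of_ne hj]
      · simp
    · exact ih a ha (fun l hl => absurd l.2 (by omega))
end
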